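/- Let m ≥ 5 be odd, η as above, and σ ∈ F_{q^2} with σ^q + ασ + β = 0 for nonzero α, β ∈ F_q, σ ∉ F_q. Then for any even i with 2 ≤ i ≤ m - 3, the 2-dimensional subspace spanned by e_i + (ασ + β)e_{i+3} and σe_{i+1} + e_{i+2} is totally isotropic for η. -/

import Mathlib

set_option maxHeartbeats 1000000 in
/-- Let `m ≥ 5` be odd, `η` the standard Hermitian form, and `σ ∈ F_{q^2} \ F_q` with
`σ^q + ασ + β = 0` for nonzero `α, β ∈ F_q`. For any even `i` (1-based) with
`2 ≤ i ≤ m-3`, the 2-dimensional subspace spanned by `e_i + (ασ+β)e_{i+3}` and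
`σe_{i+1} + e_{i+2}` is totally isotropic for `η`. -/
theorem stmt_15 (q m : ℕ) (hq : ∃ p k : ℕ, Nat.Prime p ∧ 0 < k ∧ q = p ^ k)
    (hm : Odd m) (hm5 : 5 ≤ m)
    (F : Type) [Field F] [Fintype F] (hF : Fintype.card F = q ^ 2)
    (η : (Fin m → F) → (Fin m → F) → F)
    (hη : ∀ X Y, η X Y =
      (X ⟨0, hm.pos⟩) ^ q * Y ⟨0, hm.pos⟩ +
        ∑ i ∈ Finset.range ((m - 1) / 2),
          if h : 2 * i + 2 < m then
            (X ⟨2 * i + 1, by omega⟩) ^ q * Y ⟨2 * i + 2, h⟩ +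
              (X ⟨2 * i + 2, h⟩) ^ q * Y ⟨2 * i + 1, by omega⟩
          else 0)
    (e : ℕ → Fin m → F)
    (he : ∀ i, e i = fun k : Fin m => if (k : ℕ) + 1 = i then (1 : F) else 0)
    (α β σ : F) (hα : α ^ q = α) (hβ : β ^ q = β) (hα0 : α ≠ 0) (hβ0 : β ≠ 0)
    (hσ : σ ^ q ≠ σ) (hrel : σ ^ q + α * σ + β = 0)
    (i : ℕ) (hieven : Even i) (hi2 : 2 ≤ i) (hi : i ≤ m - 3) :
    Module.finrank F
        (Submodule.span F {e i + (α * σ + β) • e (i + 3), σ • e (i + 1) + e (i + 2)}) = 2 ∧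
    ∀ u ∈ Submodule.span F {e i + (α * σ + β) • e (i + 3), σ • e (i + 1) + e (i + 2)},
      ∀ v ∈ Submodule.span F {e i + (α * σ + β) • e (i + 3), σ • e (i + 1) + e (i + 2)},
        η u v = 0 := by
  classical
  obtain ⟨p, k, hp, hk, rfl⟩ := hq
  haveI : Fact p.Prime := ⟨hp⟩
  have hq0 : p ^ k ≠ 0 := (pow_pos hp.pos k).ne'
  -- characteristic of F is p
  obtain ⟨p', hchar⟩ := CharP.exists F
  haveI := hchar
  obtain ⟨n', hp'2, hcard⟩ := FiniteField.card F p'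
  have hpp : p = p' := by
    have h1 : p ∣ p' ^ (n' : ℕ) := by
      rw [← hcard, hF]
      exact dvd_pow (dvd_pow_self p hk.ne') two_ne_zero
    exact (Nat.prime_dvd_prime_iff_eq hp hp'2).1 (hp.dvd_of_dvd_pow h1)
  subst hpp
  haveI : ExpChar F p := .prime hp
  -- key facts about σ
  have hL : α * σ + β = -σ ^ p ^ k := by linear_combination hrel
  have hLq : (α * σ + β) ^ p ^ k = -σ := by
    rw [hL]
    have h1 : (-σ ^ p ^ k) ^ p ^ k = -(σ ^ p ^ k) ^ p ^ k := by
      simpa [iterateFrobenius_def] using map_neg (iterateFrobenius F p k) (σ ^ p ^ k)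
    rw [h1, ← pow_mul, ← sq, ← hF, FiniteField.pow_card]
  obtain ⟨n, rfl⟩ := hm
  obtain ⟨r, rfl⟩ := hieven
  have hr1 : 1 ≤ r := by omega
  have hrn : r + r ≤ 2 * n - 2 := hi
  set v1 : Fin (2 * n + 1) → F := e (r + r) + (α * σ + β) • e (r + r + 3) with hv1
  set v2 : Fin (2 * n + 1) → F := σ • e (r + r + 1) + e (r + r + 2) with hv2
  have hcoord : ∀ (a b : F) (t : Fin (2 * n + 1)), (a • v1 + b • v2) t =
      (if (t : ℕ) + 1 = r + r then a else 0) +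
      (if (t : ℕ) + 1 = r + r + 3 then a * (α * σ + β) else 0) +
      (if (t : ℕ) + 1 = r + r + 1 then b * σ else 0) +
      (if (t : ℕ) + 1 = r + r + 2 then b else 0) := by
    intro a b t
    simp only [hv1, hv2, Pi.add_apply, Pi.smul_apply, smul_eq_mul, he]
    split_ifs <;> first | ring | omega
  have hzero : ∀ (a b : F) (t : Fin (2 * n + 1)), (t : ℕ) + 1 ≠ r + r →
      (t : ℕ) + 1 ≠ r + r + 1 → (t : ℕ) + 1 ≠ r + r + 2 → (t : ℕ) + 1 ≠ r + r + 3 →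
      (a • v1 + b • v2) t = 0 := by
    intro a b t h1 h2 h3 h4
    rw [hcoord, if_neg h1, if_neg h4, if_neg h2, if_neg h3]
    ring
  have c1 : ∀ a b : F, (a • v1 + b • v2) ⟨2 * (r - 1) + 1, by omega⟩ = a := by
    intro a b
    rw [hcoord]
    simp only [Fin.val_mk]
    rw [if_pos (show 2 * (r - 1) + 1 + 1 = r + r by omega),
      if_neg (show ¬2 * (r - 1) + 1 + 1 = r + r + 3 by omega),
      if_neg (show ¬2 * (r - 1) + 1 + 1 = r + r + 1 by omega),
      if_neg (show ¬2 * (r - 1) + 1 + 1 = r + r + 2 by omega)]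
    ring
  have c2 : ∀ a b : F, (a • v1 + b • v2) ⟨2 * (r - 1) + 2, by omega⟩ = b * σ := by
    intro a b
    rw [hcoord]
    simp only [Fin.val_mk]
    rw [if_neg (show ¬2 * (r - 1) + 2 + 1 = r + r by omega),
      if_neg (show ¬2 * (r - 1) + 2 + 1 = r + r + 3 by omega),
      if_pos (show 2 * (r - 1) + 2 + 1 = r + r + 1 by omega),
      if_neg (show ¬2 * (r - 1) + 2 + 1 = r + r + 2 by omega)]
    ring
  have c3 : ∀ a b : F, (a • v1 + b • v2) ⟨2 * r + 1, by omega⟩ = b := by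
    intro a b
    rw [hcoord]
    simp only [Fin.val_mk]
    rw [if_neg (show ¬2 * r + 1 + 1 = r + r by omega),
      if_neg (show ¬2 * r + 1 + 1 = r + r + 3 by omega),
      if_neg (show ¬2 * r + 1 + 1 = r + r + 1 by omega),
      if_pos (show 2 * r + 1 + 1 = r + r + 2 by omega)]
    ring
  have c4 : ∀ a b : F, (a • v1 + b • v2) ⟨2 * r + 2, by omega⟩ = a * (α * σ + β) := by
    intro a b
    rw [hcoord]
    simp only [Fin.val_mk]
    rw [if_neg (show ¬2 * r + 2 + 1 = r + r by omega),
      if_pos (show 2 * r + 2 + 1 = r + r + 3 by omega),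
      if_neg (show ¬2 * r + 2 + 1 = r + r + 1 by omega),
      if_neg (show ¬2 * r + 2 + 1 = r + r + 2 by omega)]
    ring
  have hη0 : ∀ a b c d : F, η (a • v1 + b • v2) (c • v1 + d • v2) = 0 := by
    intro a b c d
    rw [hη]
    have h0 : ∀ x y : F, (x • v1 + y • v2) ⟨0, by omega⟩ = 0 := fun x y =>
      hzero x y ⟨0, by omega⟩ (show (0 : ℕ) + 1 ≠ r + r by omega)
        (show (0 : ℕ) + 1 ≠ r + r + 1 by omega)
        (show (0 : ℕ) + 1 ≠ r + r + 2 by omega)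
        (show (0 : ℕ) + 1 ≠ r + r + 3 by omega)
    rw [h0, h0]
    rw [Finset.sum_eq_add_of_mem (r - 1) r
      (Finset.mem_range.2 (by omega)) (Finset.mem_range.2 (by omega)) (by omega)
      ?side]
    case side =>
      intro j hj hjne
      obtain ⟨hne0, hne1⟩ := hjne
      rw [Finset.mem_range] at hj
      rw [dif_pos (show 2 * j + 2 < 2 * n + 1 by omega)]
      rw [hzero a b ⟨2 * j + 1, by omega⟩ (show 2 * j + 1 + 1 ≠ r + r by omega)
            (show 2 * j + 1 + 1 ≠ r + r + 1 by omega)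
            (show 2 * j + 1 + 1 ≠ r + r + 2 by omega)
            (show 2 * j + 1 + 1 ≠ r + r + 3 by omega),
          hzero a b ⟨2 * j + 2, by omega⟩ (show 2 * j + 2 + 1 ≠ r + r by omega)
            (show 2 * j + 2 + 1 ≠ r + r + 1 by omega)
            (show 2 * j + 2 + 1 ≠ r + r + 2 by omega)
            (show 2 * j + 2 + 1 ≠ r + r + 3 by omega),
          hzero c d ⟨2 * j + 1, by omega⟩ (show 2 * j + 1 + 1 ≠ r + r by omega)
            (show 2 * j + 1 + 1 ≠ r + r + 1 by omega)
            (show 2 * j + 1 + 1 ≠ r + r + 2 by omega)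
            (show 2 * j + 1 + 1 ≠ r + r + 3 by omega),
          hzero c d ⟨2 * j + 2, by omega⟩ (show 2 * j + 2 + 1 ≠ r + r by omega)
            (show 2 * j + 2 + 1 ≠ r + r + 1 by omega)
            (show 2 * j + 2 + 1 ≠ r + r + 2 by omega)
            (show 2 * j + 2 + 1 ≠ r + r + 3 by omega)]
      simp [zero_pow hq0]
    rw [dif_pos (show 2 * (r - 1) + 2 < 2 * n + 1 by omega),
      dif_pos (show 2 * r + 2 < 2 * n + 1 by omega)]
    rw [c1 a b, c1 c d, c2 a b, c2 c d, c3 a b, c3 c d, c4 a b, c4 c d]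
    rw [mul_pow, mul_pow, hLq, hL, zero_pow hq0]
    ring
  have hli : LinearIndependent F ![v1, v2] := by
    rw [LinearIndependent.pair_iff]
    intro s t hst
    have h1 := congrFun hst ⟨2 * (r - 1) + 1, by omega⟩
    have h2 := congrFun hst ⟨2 * r + 1, by omega⟩
    rw [c1] at h1
    rw [c3] at h2
    simp only [Pi.zero_apply] at h1 h2
    exact ⟨h1, h2⟩
  refine ⟨?_, ?_⟩
  · have hrange : Set.range ![v1, v2] = {v1, v2} := by simp [Set.pair_comm]
    rw [← hrange, finrank_span_eq_card hli, Fintype.card_fin]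
  · intro u hu v hv
    rw [Submodule.mem_span_pair] at hu hv
    obtain ⟨a, b, rfl⟩ := hu
    obtain ⟨c, d, rfl⟩ := hv
    exact hη0 a b c d
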